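/- Let f ∈ conv(𝓗), δ ∈ (0,1), 0 < t < n^{α/(2+α)}, and set Δ₀ := δ n^{−1/2} t^{1/α + 1/2}. Then for every Δ̄ ∈ Δ_f: inf{ ε_n(d(f;Δ);δ;Δ) : Δ ∈ Δ_f, Δ ≥ Δ₀ } ≤ ε_n(d(f;Δ̄);δ;Δ̄) + t/n. In particular, if the infimum defining ε_n(f;δ) is attained at some Δ̄ ∈ Δ_f, then inf{ ε_n(d(f;Δ);δ;Δ) : Δ ∈ Δ_f, Δ ≥ Δ₀ } ≤ ε_n(f;δ) + t/n. -/

import Mathlib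

open Real

noncomputable section

/-- The symmetric convex hull `conv(H)`. -/
def symConv {S : Type*} (H : Set (S → ℝ)) : Set (S → ℝ) :=
  {f | ∃ (N : ℕ) (_ : 1 ≤ N) (lam : Fin N → ℝ) (h : Fin N → S → ℝ),
    (∀ i, h i ∈ H) ∧ (∑ i, |lam i|) ≤ 1 ∧ f = fun x => ∑ i, lam i * h i x}

/-- `f` admits a representation witnessing `d(f;Δ) ≤ d`. -/
def hasDim {S : Type*} (H : Set (S → ℝ)) (f : S → ℝ) (Δ : ℝ) (d : ℕ) : Prop :=
  ∃ (N : ℕ) (_ : 1 ≤ N) (lam : Fin N → ℝ) (h : Fin N → S → ℝ),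
    (∀ i, h i ∈ H) ∧ (∑ i, |lam i|) ≤ 1 ∧
    (∑ i, if d ≤ i.val then |lam i| else 0) ≤ Δ ∧
    f = fun x => ∑ i, lam i * h i x

/-- The approximate `Δ`-dimension `d(f;Δ)` of `f`. -/
def apxDim {S : Type*} (H : Set (S → ℝ)) (f : S → ℝ) (Δ : ℝ) : ℕ :=
  sInf {d : ℕ | hasDim H f Δ d}

/-- The quantity inside the infimum defining `ε_n(f;δ)`, for a given dimension `d` and `Δ`. -/
def rawEps (α : ℝ) (n d : ℕ) (δ Δ : ℝ) : ℝ :=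
  (d : ℝ) / n * (Real.log (1 / δ) + Real.log ((n : ℝ) * Real.exp 2 / d)) +
    (Δ / δ) ^ (2 * α / (α + 2)) * (n : ℝ) ^ (-(2 / (α + 2)))

/-- `ε_n(d;δ;Δ) = rawEps ∨ (2 log n)/n`. -/
def epsNDD (α : ℝ) (n d : ℕ) (δ Δ : ℝ) : ℝ :=
  max (rawEps α n d δ Δ) (2 * Real.log n / n)

/-- `ε_n(f;δ)`. -/
def epsDim {S : Type*} (H : Set (S → ℝ)) (α : ℝ) (n : ℕ) (f : S → ℝ) (δ : ℝ) : ℝ :=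
  max (sInf {v : ℝ | ∃ Δ ∈ Set.Icc (0 : ℝ) 1, apxDim H f Δ ≤ n ∧
      v = rawEps α n (apxDim H f Δ) δ Δ})
    (2 * Real.log n / n)

/-- The map `x ↦ x (C − log x)` is monotone on `[1, n]` provided `log n + 1 ≤ C`. -/
lemma phi_mono (C : ℝ) (n : ℕ) (hC : Real.log n + 1 ≤ C) :
    MonotoneOn (fun x : ℝ => x * (C - Real.log x)) (Set.Icc 1 (n : ℝ)) := by
  apply monotoneOn_of_deriv_nonneg (convex_Icc _ _)
  · apply ContinuousOn.mul continuousOn_id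
    apply ContinuousOn.sub continuousOn_const
    intro x hx
    exact (Real.continuousAt_log (by rintro rfl; exact absurd hx.1 (by norm_num))).continuousWithinAt
  · rw [interior_Icc]
    intro x hx
    have hx0 : x ≠ 0 := by rintro rfl; exact absurd hx.1 (by norm_num)
    exact ((differentiableAt_id.mul ((differentiableAt_const C).sub
      (Real.differentiableAt_log hx0)))).differentiableWithinAt
  · rw [interior_Icc]
    intro x hx
    have hx0 : x ≠ 0 := by rintro rfl; exact absurd hx.1 (by norm_num)
    have hd : HasDerivAt (fun x : ℝ => x * (C - Real.log x))
        (1 * (C - Real.log x) + x * (0 - x⁻¹)) x :=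
      (hasDerivAt_id x).mul ((hasDerivAt_const x C).sub (Real.hasDerivAt_log hx0))
    rw [hd.deriv]
    have hlx : Real.log x ≤ Real.log n := Real.log_le_log (lt_trans one_pos hx.1) hx.2.le
    have : x * (0 - x⁻¹) = -1 := by field_simp; ring
    rw [this]
    linarith

/-- Monotonicity in `d` of the first term of `rawEps`. -/
lemma gterm_mono (n : ℕ) (hn : 1 ≤ n) (δ : ℝ) (hδ0 : 0 < δ) (hδ1 : δ < 1)
    (d₀ d : ℕ) (hdd : d₀ ≤ d) (hdn : d ≤ n) :
    (d₀ : ℝ) / n * (Real.log (1 / δ) + Real.log ((n : ℝ) * Real.exp 2 / d₀)) ≤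
      (d : ℝ) / n * (Real.log (1 / δ) + Real.log ((n : ℝ) * Real.exp 2 / d)) := by
  have hn0 : (0 : ℝ) < n := by exact_mod_cast hn
  have hlδ : 0 < Real.log (1 / δ) := Real.log_pos (by rw [lt_div_iff₀ hδ0]; linarith)
  have hrw : ∀ m : ℕ, 1 ≤ m →
      Real.log ((n : ℝ) * Real.exp 2 / m) = Real.log n + 2 - Real.log m := by
    intro m hm
    have hm0 : (0 : ℝ) < m := by exact_mod_cast hm
    rw [Real.log_div (by positivity) (by positivity),
      Real.log_mul (by positivity) (by positivity), Real.log_exp]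
  set C : ℝ := Real.log (1 / δ) + (Real.log n + 2) with hCdef
  have hC : Real.log n + 1 ≤ C := by rw [hCdef]; linarith
  rcases Nat.eq_zero_or_pos d with rfl | hd1
  · interval_cases d₀; simp
  rcases Nat.eq_zero_or_pos d₀ with rfl | hd01
  · have hld : Real.log d ≤ Real.log n :=
      Real.log_le_log (by exact_mod_cast hd1) (by exact_mod_cast hdn)
    rw [hrw d hd1]
    simp only [Nat.cast_zero, zero_div, zero_mul]
    have h1 : (0:ℝ) < Real.log (1/δ) + (Real.log n + 2 - Real.log d) := by linarith
    positivity
  · rw [hrw d hd1, hrw d₀ hd01]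
    have h1 : Real.log (1/δ) + (Real.log ↑n + 2 - Real.log ↑d₀) = C - Real.log d₀ := by
      rw [hCdef]; ring
    have h2 : Real.log (1/δ) + (Real.log ↑n + 2 - Real.log ↑d) = C - Real.log d := by
      rw [hCdef]; ring
    rw [h1, h2]
    have hm1 : (d₀ : ℝ) ∈ Set.Icc 1 (n : ℝ) :=
      ⟨by exact_mod_cast hd01, by exact_mod_cast (hdd.trans hdn)⟩
    have hm2 : (d : ℝ) ∈ Set.Icc 1 (n : ℝ) :=
      ⟨by exact_mod_cast (hd01.trans_le hdd), by exact_mod_cast hdn⟩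
    have key := phi_mono C n hC hm1 hm2 (by exact_mod_cast hdd)
    simp only at key
    rw [div_mul_eq_mul_div, div_mul_eq_mul_div]
    exact (div_le_div_iff_of_pos_right hn0).mpr key

lemma hasDim_nonempty {S : Type*} {H : Set (S → ℝ)} {f : S → ℝ} {Δ : ℝ}
    (hf : f ∈ symConv H) (hΔ : 0 ≤ Δ) : {d : ℕ | hasDim H f Δ d}.Nonempty := by
  obtain ⟨N, hN, lam, h, hh, hl, hfe⟩ := hf
  refine ⟨N, N, hN, lam, h, hh, hl, ?_, hfe⟩
  have : (∑ i : Fin N, if N ≤ i.val then |lam i| else 0) = 0 := by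
    apply Finset.sum_eq_zero
    intro i _
    rw [if_neg (not_le.mpr i.isLt)]
  rw [this]; exact hΔ

lemma apxDim_anti {S : Type*} {H : Set (S → ℝ)} {f : S → ℝ} {Δ Δ' : ℝ}
    (hf : f ∈ symConv H) (hΔ : 0 ≤ Δ) (hΔΔ : Δ ≤ Δ') :
    apxDim H f Δ' ≤ apxDim H f Δ := by
  have hne := hasDim_nonempty hf hΔ
  have hmem := Nat.sInf_mem hne
  apply Nat.sInf_le
  obtain ⟨N, hN, lam, h, hh, hl, hs, hfe⟩ := hmem
  exact ⟨N, hN, lam, h, hh, hl, hs.trans hΔΔ, hfe⟩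

lemma deltaTerm_eq (α : ℝ) (hα0 : 0 < α) (n : ℕ) (hn : 1 ≤ n) (δ t : ℝ)
    (hδ0 : 0 < δ) (ht0 : 0 < t) :
    ((δ * (n : ℝ) ^ (-(1 / 2 : ℝ)) * t ^ (1 / α + 1 / 2)) / δ) ^ (2 * α / (α + 2)) *
      (n : ℝ) ^ (-(2 / (α + 2))) = t / n := by
  have hα2 : (0:ℝ) < α + 2 := by linarith
  have hn0 : (0 : ℝ) < n := by exact_mod_cast hn
  have h1 : (δ * (n : ℝ) ^ (-(1 / 2 : ℝ)) * t ^ (1 / α + 1 / 2)) / δ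
      = (n : ℝ) ^ (-(1 / 2 : ℝ)) * t ^ (1 / α + 1 / 2) := by
    field_simp
  rw [h1, Real.mul_rpow (by positivity) (by positivity),
    ← Real.rpow_mul hn0.le, ← Real.rpow_mul ht0.le, mul_right_comm,
    ← Real.rpow_add hn0]
  have e1 : (1 / α + 1 / 2) * (2 * α / (α + 2)) = 1 := by
    field_simp; ring
  have e2 : -(1 / 2 : ℝ) * (2 * α / (α + 2)) + -(2 / (α + 2)) = -1 := by
    field_simp; ring
  rw [e1, e2, Real.rpow_one, Real.rpow_neg_one]
  rw [inv_mul_eq_div]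

lemma texp_lt (α : ℝ) (hα0 : 0 < α) (n : ℕ) (hn : 1 ≤ n) (t : ℝ) (ht0 : 0 < t)
    (ht : t < (n : ℝ) ^ (α / (2 + α))) :
    t ^ (1 / α + 1 / 2) < (n : ℝ) ^ ((1 : ℝ) / 2) := by
  have hα2 : (0:ℝ) < 2 + α := by linarith
  have hn0 : (0 : ℝ) < n := by exact_mod_cast hn
  have he : (0:ℝ) < 1 / α + 1 / 2 := by positivity
  have := Real.rpow_lt_rpow ht0.le ht he
  rwa [← Real.rpow_mul hn0.le,
    show (α / (2 + α)) * (1 / α + 1 / 2) = 1/2 by field_simp] at this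

/-- Step 4 of the proof of Theorem 3 (inequality (st4′)): with
`Δ₀ = δ n^{−1/2} t^{1/α+1/2}`, for every `Δ̄ ∈ Δ_f`,
`inf{ε_n(d(f;Δ);δ;Δ) : Δ ∈ Δ_f, Δ ≥ Δ₀} ≤ ε_n(d(f;Δ̄);δ;Δ̄) + t/n`; in particular, if the
infimum defining `ε_n(f;δ)` is attained at `Δ̄ ∈ Δ_f`, then it is `≤ ε_n(f;δ) + t/n`. -/
theorem stmt18 {S : Type*} (H : Set (S → ℝ)) (V : ℝ) (hV : 0 < V)
    (α : ℝ) (hα : α = 2 * V / (V + 2)) (n : ℕ) (hn : 1 ≤ n)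
    (f : S → ℝ) (hf : f ∈ symConv H) (δ : ℝ) (hδ : δ ∈ Set.Ioo (0 : ℝ) 1)
    (t : ℝ) (ht0 : 0 < t) (ht : t < (n : ℝ) ^ (α / (2 + α))) :
    (∀ Δb ∈ Set.Icc (0 : ℝ) 1, apxDim H f Δb ≤ n →
      sInf {v : ℝ | ∃ Δ ∈ Set.Icc (0 : ℝ) 1, apxDim H f Δ ≤ n ∧
          δ * (n : ℝ) ^ (-(1 / 2 : ℝ)) * t ^ (1 / α + 1 / 2) ≤ Δ ∧
          v = epsNDD α n (apxDim H f Δ) δ Δ} ≤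
        epsNDD α n (apxDim H f Δb) δ Δb + t / n) ∧
    (∀ Δb ∈ Set.Icc (0 : ℝ) 1, apxDim H f Δb ≤ n →
      rawEps α n (apxDim H f Δb) δ Δb =
        sInf {v : ℝ | ∃ Δ ∈ Set.Icc (0 : ℝ) 1, apxDim H f Δ ≤ n ∧
          v = rawEps α n (apxDim H f Δ) δ Δ} →
      sInf {v : ℝ | ∃ Δ ∈ Set.Icc (0 : ℝ) 1, apxDim H f Δ ≤ n ∧
          δ * (n : ℝ) ^ (-(1 / 2 : ℝ)) * t ^ (1 / α + 1 / 2) ≤ Δ ∧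
          v = epsNDD α n (apxDim H f Δ) δ Δ} ≤
        epsDim H α n f δ + t / n) := by
  obtain ⟨hδ0, hδ1⟩ := hδ
  have hα0 : 0 < α := by rw [hα]; positivity
  have hn0 : (0:ℝ) < n := by exact_mod_cast hn
  have hlogn : 0 ≤ Real.log n := Real.log_nonneg (by exact_mod_cast hn)
  have htn : 0 ≤ t / n := by positivity
  set Δ₀ : ℝ := δ * (n : ℝ) ^ (-(1 / 2 : ℝ)) * t ^ (1 / α + 1 / 2) with hΔ₀
  have hΔ₀pos : 0 < Δ₀ := by rw [hΔ₀]; positivity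
  have hΔ₀lt : Δ₀ < δ := by
    have h2 := texp_lt α hα0 n hn t ht0 ht
    calc Δ₀ < δ * (n : ℝ) ^ (-(1 / 2 : ℝ)) * (n:ℝ)^((1:ℝ)/2) := by
          rw [hΔ₀]; exact mul_lt_mul_of_pos_left h2 (by positivity)
      _ = δ := by rw [mul_assoc, ← Real.rpow_add hn0]; norm_num
  have hΔ₀le1 : Δ₀ ≤ 1 := (hΔ₀lt.trans hδ1).le
  set Sv := {v : ℝ | ∃ Δ ∈ Set.Icc (0 : ℝ) 1, apxDim H f Δ ≤ n ∧ Δ₀ ≤ Δ ∧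
      v = epsNDD α n (apxDim H f Δ) δ Δ} with hSv
  have hbdd : BddBelow Sv := by
    refine ⟨0, ?_⟩
    rintro v ⟨Δ, hΔ, hd, hge, rfl⟩
    exact le_trans (div_nonneg (by linarith) hn0.le) (le_max_right _ _)
  have main : ∀ Δb ∈ Set.Icc (0 : ℝ) 1, apxDim H f Δb ≤ n →
      sInf Sv ≤ epsNDD α n (apxDim H f Δb) δ Δb + t / n := by
    intro Δb hΔb hdb
    rcases le_or_gt Δ₀ Δb with hcase | hcase
    · have hmem : epsNDD α n (apxDim H f Δb) δ Δb ∈ Sv := ⟨Δb, hΔb, hdb, hcase, rfl⟩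
      exact (csInf_le hbdd hmem).trans (le_add_of_nonneg_right htn)
    · have hdle : apxDim H f Δ₀ ≤ apxDim H f Δb := apxDim_anti hf hΔb.1 hcase.le
      have hmem : epsNDD α n (apxDim H f Δ₀) δ Δ₀ ∈ Sv :=
        ⟨Δ₀, ⟨hΔ₀pos.le, hΔ₀le1⟩, hdle.trans hdb, le_refl _, rfl⟩
      refine (csInf_le hbdd hmem).trans ?_
      have hraw : rawEps α n (apxDim H f Δ₀) δ Δ₀ ≤
          rawEps α n (apxDim H f Δb) δ Δb + t / n := by
        unfold rawEps
        rw [hΔ₀, deltaTerm_eq α hα0 n hn δ t hδ0 ht0]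
        have hg := gterm_mono n hn δ hδ0 hδ1 _ _ hdle hdb
        have hdiv : 0 ≤ Δb / δ := div_nonneg hΔb.1 hδ0.le
        have hpos : 0 ≤ (Δb / δ) ^ (2 * α / (α + 2)) * (n : ℝ) ^ (-(2 / (α + 2))) := by
          positivity
        rw [← hΔ₀]
        linarith
      unfold epsNDD
      calc max (rawEps α n (apxDim H f Δ₀) δ Δ₀) (2 * Real.log n / n)
          ≤ max (rawEps α n (apxDim H f Δb) δ Δb + t / n) (2 * Real.log n / n + t / n) :=
            max_le_max hraw (le_add_of_nonneg_right htn)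
        _ = max (rawEps α n (apxDim H f Δb) δ Δb) (2 * Real.log n / n) + t / n :=
            max_add_add_right _ _ _
  refine ⟨main, ?_⟩
  intro Δb hΔb hdb heq
  have hed : epsDim H α n f δ = epsNDD α n (apxDim H f Δb) δ Δb := by
    unfold epsDim epsNDD
    rw [← heq]
  rw [hed]
  exact main Δb hΔb hdb
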